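/- Let k ≥ 1 and k+1 ≤ p ≤ 2k. The number of quadruples (a,b,c,d) of nonnegative integers, counted up to swapping c and d, satisfying 2a+c+d+3 = 2k+1-p and 2b+c+d+4 = p equals (1/2)⌊p/2⌋² - (1/2)⌊p/2⌋(2p-2k-1) + (1/2)(p-k-1)(p-k). -/

import Mathlib

lemma aux_sum_card (n : ℕ) : (∑ s ∈ Finset.range n, (s+1)) * 2 = n * (n+1) := by
  induction n with
  | zero => simp
  | succ n ih => rw [Finset.sum_range_succ, add_mul, ih]; ring

lemma tri_card (n : ℕ) :
    (((Finset.range (n+1)) ×ˢ (Finset.range (n+1))).filter (fun x => x.1 + x.2 ≤ n)).card * 2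
      = (n+1) * (n+2) := by
  have h : ((Finset.range (n+1)) ×ˢ (Finset.range (n+1))).filter (fun x => x.1 + x.2 ≤ n)
      = (Finset.range (n+1)).biUnion (fun s => Finset.HasAntidiagonal.antidiagonal s) := by
    ext ⟨x, y⟩
    simp [Finset.HasAntidiagonal.mem_antidiagonal, Finset.mem_product]
    omega
  rw [h, Finset.card_biUnion]
  · simp only [Finset.Nat.card_antidiagonal]
    exact aux_sum_card (n+1)
  · intro x _ y _ hxy
    rw [Function.onFun, Finset.disjoint_left]
    intro a ha hb
    simp only [Finset.HasAntidiagonal.mem_antidiagonal] at ha hb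
    omega

/-- Quadruples counted up to swapping c and d: representatives with c ≤ d. -/
theorem stmt11 (k p : ℤ) (hk : 1 ≤ k) (h1 : k+1 ≤ p) (h2 : p ≤ 2*k) :
    (Set.ncard {t : ℤ × ℤ × ℤ × ℤ |
        0 ≤ t.1 ∧ 0 ≤ t.2.1 ∧ 0 ≤ t.2.2.1 ∧ 0 ≤ t.2.2.2 ∧ t.2.2.1 ≤ t.2.2.2 ∧
        2*t.1 + t.2.2.1 + t.2.2.2 + 3 = 2*k+1-p ∧ 2*t.2.1 + t.2.2.1 + t.2.2.2 + 4 = p} : ℚ)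
      = (1/2) * ((p/2 : ℤ) : ℚ)^2
        - (1/2) * ((p/2 : ℤ) : ℚ) * (2*(p:ℚ) - 2*(k:ℚ) - 1)
        + (1/2) * ((p:ℚ) - (k:ℚ) - 1) * ((p:ℚ) - (k:ℚ)) := by
  set m : ℤ := (2*k-2-p)/2 with hm
  have hm1 : 2*m ≤ 2*k-2-p := by omega
  have hm2 : 2*k-2-p ≤ 2*m+1 := by omega
  have key : (Set.ncard {t : ℤ × ℤ × ℤ × ℤ |
        0 ≤ t.1 ∧ 0 ≤ t.2.1 ∧ 0 ≤ t.2.2.1 ∧ 0 ≤ t.2.2.2 ∧ t.2.2.1 ≤ t.2.2.2 ∧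
        2*t.1 + t.2.2.1 + t.2.2.2 + 3 = 2*k+1-p ∧ 2*t.2.1 + t.2.2.1 + t.2.2.2 + 4 = p} : ℚ)
      = ((m:ℚ)+1)*((m:ℚ)+2)/2 := by
    rcases lt_or_ge m 0 with hm0 | hm0
    · have hmm : m = -1 := by omega
      have hS : {t : ℤ × ℤ × ℤ × ℤ |
        0 ≤ t.1 ∧ 0 ≤ t.2.1 ∧ 0 ≤ t.2.2.1 ∧ 0 ≤ t.2.2.2 ∧ t.2.2.1 ≤ t.2.2.2 ∧
        2*t.1 + t.2.2.1 + t.2.2.2 + 3 = 2*k+1-p ∧ 2*t.2.1 + t.2.2.1 + t.2.2.2 + 4 = p} = ∅ := by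
        ext ⟨a, b, c, d⟩
        simp only [Set.mem_setOf_eq, Set.mem_empty_iff_false, iff_false, not_and]
        intro ha hb hc hd hcd e1
        omega
      rw [hS, hmm]
      simp
    · set n : ℕ := m.toNat with hn'
      have hn : (n : ℤ) = m := Int.toNat_of_nonneg hm0
      set g : ℕ × ℕ → ℤ × ℤ × ℤ × ℤ :=
        fun x => ((x.1 : ℤ), p-k-1+x.1, (x.2 : ℤ), 2*k-2-p-2*x.1-x.2) with hg
      have hset : {t : ℤ × ℤ × ℤ × ℤ |
        0 ≤ t.1 ∧ 0 ≤ t.2.1 ∧ 0 ≤ t.2.2.1 ∧ 0 ≤ t.2.2.2 ∧ t.2.2.1 ≤ t.2.2.2 ∧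
        2*t.1 + t.2.2.1 + t.2.2.2 + 3 = 2*k+1-p ∧ 2*t.2.1 + t.2.2.1 + t.2.2.2 + 4 = p}
          = ↑((((Finset.range (n+1)) ×ˢ (Finset.range (n+1))).filter
              (fun x => x.1 + x.2 ≤ n)).image g) := by
        ext ⟨a, b, c, d⟩
        simp only [Set.mem_setOf_eq, Finset.coe_image, Set.mem_image, Finset.mem_coe,
          Finset.mem_filter, Finset.mem_product, Finset.mem_range, hg, Prod.ext_iff,
          Prod.exists]
        constructor
        · rintro ⟨ha, hb, hc, hd, hcd, e1, e2⟩
          refine ⟨a.toNat, c.toNat, ⟨⟨?_, ?_⟩, ?_⟩, ?_, ?_, ?_, ?_⟩ <;> omega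
        · rintro ⟨x, y, ⟨⟨hx, hy⟩, hxy⟩, h1', h2', h3', h4'⟩
          refine ⟨?_, ?_, ?_, ?_, ?_, ?_, ?_⟩ <;> omega
      rw [hset, Set.ncard_coe_finset]
      have hinj : Function.Injective g := by
        rintro ⟨x1, y1⟩ ⟨x2, y2⟩ h
        simp only [hg, Prod.ext_iff] at h
        obtain ⟨e1, _, e2, _⟩ := h
        exact Prod.ext (by exact_mod_cast e1) (by exact_mod_cast e2)
      rw [Finset.card_image_of_injective _ hinj]
      have hc := tri_card n
      have hcq : ((((Finset.range (n+1)) ×ˢ (Finset.range (n+1))).filter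
          (fun x => x.1 + x.2 ≤ n)).card : ℚ) * 2 = ((n:ℚ)+1) * ((n:ℚ)+2) := by
        exact_mod_cast hc
      have hnm : (n : ℚ) = (m : ℚ) := by exact_mod_cast congrArg (Int.cast : ℤ → ℚ) hn
      rw [hnm] at hcq
      linarith
  rw [key]
  rcases Int.even_or_odd p with ⟨q, hq⟩ | ⟨q, hq⟩
  · have e1 : p/2 = q := by omega
    have e2 : m = k - 1 - q := by omega
    rw [e1, e2, hq]
    push_cast
    ring
  · have e1 : p/2 = q := by omega
    have e2 : m = k - 2 - q := by omega
    rw [e1, e2, hq]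
    push_cast
    ring
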